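/- Let M ≥ 2 be an integer and let g, p : ℝ → ℝ be nonnegative even functions that are nonincreasing on [0, ∞) and Lipschitz continuous, with g bounded and p integrable. Then for every nonempty finite set Γ ⊆ ℝ with |Γ| ≤ M − 1, one has ∫_ℝ (max_{γ∈Γ} g(x − γ)) · p(x) dx ≤ ∫_ℝ g(x/(M−1)) · p(x) dx. -/
import Mathlib
open MeasureTheory Set
open scoped ENNReal NNReal

lemma even_abs_val {p : ℝ → ℝ} (hp_even : ∀ x, p (-x) = p x) (x : ℝ) : p x = p |x| := by
  rcases abs_cases x with ⟨h, _⟩ | ⟨h, _⟩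
  · rw [h]
  · rw [h, hp_even]

lemma bathtub (p : ℝ → ℝ) (hp_even : ∀ x, p (-x) = p x)
    (hp_anti : AntitoneOn p (Set.Ici 0)) (hp_meas : Measurable p)
    (c : ℝ) (hc : 0 ≤ c) (A : Set ℝ) (hA : MeasurableSet A)
    (hvol : volume A ≤ volume (Ioo (-c) c)) :
    ∫⁻ x in A, ENNReal.ofReal (p x) ≤ ∫⁻ x in Ioo (-c) c, ENNReal.ofReal (p x) := by
  set B : Set ℝ := Ioo (-c) c with hBdef
  have hB : MeasurableSet B := measurableSet_Ioo
  have hBfin : volume B ≠ ⊤ := by simp [hBdef]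
  have hABfin : volume (A ∩ B) ≠ ⊤ :=
    ne_top_of_le_ne_top hBfin (measure_mono inter_subset_right)
  have hdiff : volume (A \ B) ≤ volume (B \ A) := by
    have h1 : volume (A ∩ B) + volume (A \ B) = volume A := measure_inter_add_diff A hB
    have h2 : volume (B ∩ A) + volume (B \ A) = volume B := measure_inter_add_diff B hA
    rw [inter_comm] at h2
    have : volume (A ∩ B) + volume (A \ B) ≤ volume (A ∩ B) + volume (B \ A) := by
      rw [h1, h2]; exact hvol
    exact (ENNReal.add_le_add_iff_left hABfin).mp this
  have key1 : ∀ x ∈ A \ B, p x ≤ p c := by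
    intro x hx
    have hxB : x ∉ B := hx.2
    have habs : c ≤ |x| := by
      by_contra h
      push_neg at h
      exact hxB ⟨(abs_lt.mp h).1, (abs_lt.mp h).2⟩
    rw [even_abs_val hp_even x]
    exact hp_anti (mem_Ici.mpr hc) (mem_Ici.mpr (abs_nonneg x)) habs
  have key2 : ∀ x ∈ B \ A, p c ≤ p x := by
    intro x hx
    have hxB : x ∈ B := hx.1
    have habs : |x| ≤ c := le_of_lt (abs_lt.mpr ⟨hxB.1, hxB.2⟩)
    rw [even_abs_val hp_even x]
    exact hp_anti (mem_Ici.mpr (abs_nonneg x)) (mem_Ici.mpr hc) habs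
  calc ∫⁻ x in A, ENNReal.ofReal (p x)
      = (∫⁻ x in A ∩ B, ENNReal.ofReal (p x)) + ∫⁻ x in A \ B, ENNReal.ofReal (p x) :=
        (lintegral_inter_add_diff _ A hB).symm
    _ ≤ (∫⁻ x in A ∩ B, ENNReal.ofReal (p x)) + ∫⁻ x in B \ A, ENNReal.ofReal (p x) := by
        gcongr ?_ + ?_
        · exact le_rfl
        calc ∫⁻ x in A \ B, ENNReal.ofReal (p x)
            ≤ ∫⁻ _x in A \ B, ENNReal.ofReal (p c) :=
              setLIntegral_mono' (hA.diff hB) (fun x hx => ENNReal.ofReal_le_ofReal (key1 x hx))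
          _ = ENNReal.ofReal (p c) * volume (A \ B) := setLIntegral_const _ _
          _ ≤ ENNReal.ofReal (p c) * volume (B \ A) := by gcongr
          _ = ∫⁻ _x in B \ A, ENNReal.ofReal (p c) := (setLIntegral_const _ _).symm
          _ ≤ ∫⁻ x in B \ A, ENNReal.ofReal (p x) :=
              setLIntegral_mono' (hB.diff hA) (fun x hx => ENNReal.ofReal_le_ofReal (key2 x hx))
    _ = (∫⁻ x in B ∩ A, ENNReal.ofReal (p x)) + ∫⁻ x in B \ A, ENNReal.ofReal (p x) := by
        rw [inter_comm]
    _ = ∫⁻ x in B, ENNReal.ofReal (p x) := lintegral_inter_add_diff _ B hA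

/-- rearrangement inequality for translates of `g` against `p`. -/
theorem max_translates_integral_le (M : ℕ) (hM : 2 ≤ M) (g p : ℝ → ℝ)
    (hg_nonneg : ∀ x, 0 ≤ g x) (hg_even : ∀ x, g (-x) = g x)
    (hg_anti : AntitoneOn g (Set.Ici 0))
    (hg_lip : ∃ K : NNReal, LipschitzWith K g)
    (hg_bdd : ∃ C : ℝ, ∀ x, g x ≤ C)
    (hp_nonneg : ∀ x, 0 ≤ p x) (hp_even : ∀ x, p (-x) = p x)
    (hp_anti : AntitoneOn p (Set.Ici 0))
    (hp_lip : ∃ K : NNReal, LipschitzWith K p)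
    (hp_int : Integrable p)
    (Γ : Finset ℝ) (hΓ : Γ.Nonempty) (hcard : Γ.card ≤ M - 1) :
    ∫ x : ℝ, (Γ.sup' hΓ fun γ => g (x - γ)) * p x
      ≤ ∫ x : ℝ, g (x / ((M : ℝ) - 1)) * p x := by
  obtain ⟨Kg, hKg⟩ := hg_lip
  obtain ⟨Kp, hKp⟩ := hp_lip
  have hgc : Continuous g := hKg.continuous
  have hpc : Continuous p := hKp.continuous
  obtain ⟨C, hC⟩ := hg_bdd
  set m : ℝ := (M : ℝ) - 1 with hm
  have hm1 : (1:ℝ) ≤ m := by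
    have h2 : (2:ℝ) ≤ (M:ℝ) := by exact_mod_cast hM
    simp only [hm]; linarith
  have hm0 : (0:ℝ) < m := lt_of_lt_of_le one_pos hm1
  set F : ℝ → ℝ := fun x => Γ.sup' hΓ fun γ => g (x - γ) with hF
  set G : ℝ → ℝ := fun x => g (x / m) with hG
  have hFc : Continuous F :=
    Continuous.finset_sup'_apply hΓ fun γ _ => hgc.comp (continuous_id.sub continuous_const)
  have hGc : Continuous G := hgc.comp (continuous_id.div_const m)
  have hF_nonneg : ∀ x, 0 ≤ F x := fun x => by
    obtain ⟨γ0, hγ0⟩ := hΓ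
    exact le_trans (hg_nonneg (x - γ0)) (Finset.le_sup' (fun γ => g (x - γ)) hγ0)
  have hG_nonneg : ∀ x, 0 ≤ G x := fun x => hg_nonneg _
  set ν : Measure ℝ := volume.withDensity (fun x => ENNReal.ofReal (p x)) with hν
  have hpmeas : Measurable fun x => ENNReal.ofReal (p x) := hpc.measurable.ennreal_ofReal
  -- core measure inequality
  have core : ∀ t : ℝ, ν {x | t < F x} ≤ ν {x | t < G x} := by
    intro t
    have hsym : ∀ y z : ℝ, |z| ≤ |y| → t < g y → t < g z := by
      intro y z hzy hy
      have h1 : g y = g |y| := even_abs_val hg_even y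
      have h2 : g |y| ≤ g |z| :=
        hg_anti (mem_Ici.mpr (abs_nonneg z)) (mem_Ici.mpr (abs_nonneg y)) hzy
      have h3 : g z = g |z| := even_abs_val hg_even z
      linarith
    by_cases hne : ∃ y, t < g y
    · by_cases hbdd : BddAbove ((fun y => |y|) '' {y | t < g y})
      · set S : Set ℝ := {y | t < g y} with hS
        obtain ⟨y0, hy0⟩ := hne
        have hy0S : y0 ∈ S := hy0
        have hSne : ((fun y => |y|) '' S).Nonempty := ⟨|y0|, mem_image_of_mem _ hy0S⟩
        set R : ℝ := sSup ((fun y => |y|) '' S) with hR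
        have hR0 : 0 ≤ R := le_trans (abs_nonneg y0) (le_csSup hbdd ⟨y0, hy0, rfl⟩)
        have hSsub : S ⊆ Icc (-R) R := fun y hy =>
          mem_Icc.mpr (abs_le.mp (le_csSup hbdd ⟨y, hy, rfl⟩))
        have hIoo_sub : Ioo (-(m*R)) (m*R) ⊆ {x | t < G x} := by
          intro x hx
          have hx' : |x| < m * R := abs_lt.mpr ⟨hx.1, hx.2⟩
          have hxm : |x / m| < R := by
            rw [abs_div, abs_of_pos hm0, div_lt_iff₀ hm0]
            linarith [mul_comm m R]
          obtain ⟨r, ⟨y, hyS, rfl⟩, hr⟩ := exists_lt_of_lt_csSup hSne hxm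
          exact hsym y (x/m) hr.le hyS
        have hset : {x | t < F x} = ⋃ γ ∈ Γ, {x | t < g (x - γ)} := by
          ext x
          simp only [mem_setOf_eq, mem_iUnion, hF, Finset.lt_sup'_iff, exists_prop]
        have hopen : ∀ γ : ℝ, IsOpen {x | t < g (x - γ)} :=
          fun γ => isOpen_lt continuous_const (hgc.comp (continuous_id.sub continuous_const))
        have hAmeas : MeasurableSet (⋃ γ ∈ Γ, {x | t < g (x - γ)}) :=
          Γ.measurableSet_biUnion fun γ _ => (hopen γ).measurableSet
        have hvolS : volume S ≤ ENNReal.ofReal (2 * R) := by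
          calc volume S ≤ volume (Icc (-R) R) := measure_mono hSsub
            _ = ENNReal.ofReal (2 * R) := by rw [Real.volume_Icc]; congr 1; ring
        have hcard' : (Γ.card : ℝ≥0∞) ≤ ENNReal.ofReal m := by
          rw [← ENNReal.ofReal_natCast Γ.card]
          apply ENNReal.ofReal_le_ofReal
          have h1 : ((Γ.card : ℝ)) ≤ ((M - 1 : ℕ) : ℝ) := by exact_mod_cast hcard
          rwa [Nat.cast_sub (by omega), Nat.cast_one] at h1
        have hvolA : volume (⋃ γ ∈ Γ, {x | t < g (x - γ)}) ≤ volume (Ioo (-(m*R)) (m*R)) := by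
          calc volume (⋃ γ ∈ Γ, {x | t < g (x - γ)})
              ≤ ∑ γ ∈ Γ, volume {x | t < g (x - γ)} := measure_biUnion_finset_le Γ _
            _ = ∑ _γ ∈ Γ, volume S := by
                refine Finset.sum_congr rfl fun γ _ => ?_
                have hpre : {x | t < g (x - γ)} = (fun x => x + -γ) ⁻¹' S := by
                  ext x; simp [hS, sub_eq_add_neg]
                rw [hpre, measure_preimage_add_right]
            _ = (Γ.card : ℝ≥0∞) * volume S := by rw [Finset.sum_const, nsmul_eq_mul]
            _ ≤ ENNReal.ofReal m * ENNReal.ofReal (2*R) := mul_le_mul' hcard' hvolS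
            _ = volume (Ioo (-(m*R)) (m*R)) := by
                rw [← ENNReal.ofReal_mul hm0.le, Real.volume_Ioo]; congr 1; ring
        calc ν {x | t < F x} = ν (⋃ γ ∈ Γ, {x | t < g (x - γ)}) := by rw [hset]
          _ = ∫⁻ x in (⋃ γ ∈ Γ, {x | t < g (x - γ)}), ENNReal.ofReal (p x) :=
              withDensity_apply _ hAmeas
          _ ≤ ∫⁻ x in Ioo (-(m*R)) (m*R), ENNReal.ofReal (p x) :=
              bathtub p hp_even hp_anti hpc.measurable (m*R) (mul_nonneg hm0.le hR0) _
                hAmeas hvolA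
          _ = ν (Ioo (-(m*R)) (m*R)) := (withDensity_apply _ measurableSet_Ioo).symm
          _ ≤ ν {x | t < G x} := measure_mono hIoo_sub
      · have huniv : {x | t < G x} = univ := by
          apply eq_univ_of_forall
          intro x
          rw [not_bddAbove_iff] at hbdd
          obtain ⟨r, ⟨y, hy, rfl⟩, hr⟩ := hbdd |x / m|
          exact hsym y (x/m) hr.le hy
        rw [huniv]
        exact measure_mono (subset_univ _)
    · push_neg at hne
      have hemp : {x | t < F x} = ∅ := by
        apply eq_empty_iff_forall_notMem.mpr
        intro x hx
        have hx' : t < Γ.sup' hΓ fun γ => g (x - γ) := hx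
        obtain ⟨γ, _, hγ⟩ := (Finset.lt_sup'_iff hΓ).mp hx'
        exact (hne (x - γ)).not_gt hγ
      rw [hemp]
      simp
  -- convert real integrals to lintegrals
  have hFmul_nonneg : ∀ x, 0 ≤ F x * p x := fun x => mul_nonneg (hF_nonneg x) (hp_nonneg x)
  have hGmul_nonneg : ∀ x, 0 ≤ G x * p x := fun x => mul_nonneg (hG_nonneg x) (hp_nonneg x)
  rw [show (∫ x : ℝ, (Γ.sup' hΓ fun γ => g (x - γ)) * p x) = ∫ x : ℝ, F x * p x from rfl,
      show (∫ x : ℝ, g (x / ((M : ℝ) - 1)) * p x) = ∫ x : ℝ, G x * p x from rfl,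
      integral_eq_lintegral_of_nonneg_ae (Filter.Eventually.of_forall hFmul_nonneg)
        ((hFc.mul hpc).aestronglyMeasurable),
      integral_eq_lintegral_of_nonneg_ae (Filter.Eventually.of_forall hGmul_nonneg)
        ((hGc.mul hpc).aestronglyMeasurable)]
  have hfin : ∫⁻ x, ENNReal.ofReal (G x * p x) ≠ ⊤ := by
    have hC0 : 0 ≤ C := le_trans (hg_nonneg 0) (hC 0)
    have hb : ∀ x, ENNReal.ofReal (G x * p x) ≤ ENNReal.ofReal (C * p x) := fun x =>
      ENNReal.ofReal_le_ofReal (mul_le_mul_of_nonneg_right (hC _) (hp_nonneg x))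
    exact ne_top_of_le_ne_top ((hp_int.const_mul C).lintegral_lt_top.ne) (lintegral_mono hb)
  apply ENNReal.toReal_mono hfin
  have hrw : ∀ (f : ℝ → ℝ), (∀ x, 0 ≤ f x) → Measurable f →
      ∫⁻ x, ENNReal.ofReal (f x * p x) = ∫⁻ t in Ioi (0:ℝ), ν {x | t < f x} := by
    intro f hf hfm
    have heq : ∀ x, ENNReal.ofReal (f x * p x) = ENNReal.ofReal (p x) * ENNReal.ofReal (f x) := by
      intro x; rw [ENNReal.ofReal_mul (hf x), mul_comm]
    calc ∫⁻ x, ENNReal.ofReal (f x * p x)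
        = ∫⁻ x, ((fun x => ENNReal.ofReal (p x)) * fun x => ENNReal.ofReal (f x)) x := by
          simp only [Pi.mul_apply]; exact lintegral_congr heq
      _ = ∫⁻ x, ENNReal.ofReal (f x) ∂ν :=
          (lintegral_withDensity_eq_lintegral_mul volume hpmeas hfm.ennreal_ofReal).symm
      _ = ∫⁻ t in Ioi (0:ℝ), ν {x | t < f x} :=
          lintegral_eq_lintegral_meas_lt ν (Filter.Eventually.of_forall hf) hfm.aemeasurable
  rw [hrw F hF_nonneg hFc.measurable, hrw G hG_nonneg hGc.measurable]
  exact lintegral_mono fun t => core t
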